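/- arXiv:2310.05527 — 2 statements merged into one kernel-verified Lean document; each statement's English description precedes it below -/
import Mathlib

section
/- For a node x in the uniform recursive tree U_g with label {0, i_1, …, i_n}, its resistance distance (the sum of resistance distances from x to all nodes) equals r_x(g) = g·f·(f+1)^{g−1} + (f+1)^g·[n − 2·Σ_{k=1}^{n} (f+1)^{−i_k}]. -/
open Matrix BigOperators

/-- The vertices of the uniform recursive tree `U_g` with branching parameter `f`:
`U_0` is a single node (the central node), and at each iteration every existing
node receives `f` new leaf children. -/
def URTV (f : ℕ) : ℕ → Type
  | 0 => Unit
  | g + 1 => URTV f g ⊕ (URTV f g × Fin f)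

instance urtFintype (f : ℕ) : ∀ g, Fintype (URTV f g)
  | 0 => inferInstanceAs (Fintype Unit)
  | g + 1 =>
    letI := urtFintype f g
    inferInstanceAs (Fintype (URTV f g ⊕ (URTV f g × Fin f)))

instance urtDecEq (f : ℕ) : ∀ g, DecidableEq (URTV f g)
  | 0 => inferInstanceAs (DecidableEq Unit)
  | g + 1 =>
    letI := urtDecEq f g
    inferInstanceAs (DecidableEq (URTV f g ⊕ (URTV f g × Fin f)))

/-- The adjacency relation of `U_g`: each new leaf is joined to the node it was
attached to. -/
def urtRel (f : ℕ) : ∀ g, URTV f g → URTV f g → Prop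
  | 0, _, _ => False
  | g + 1, Sum.inl x, Sum.inl y => urtRel f g x y
  | _ + 1, Sum.inl x, Sum.inr (y, _) => x = y
  | _ + 1, Sum.inr (x, _), Sum.inl y => x = y
  | _ + 1, Sum.inr _, Sum.inr _ => False

/-- The uniform recursive tree `U_g` as a simple graph. -/
def urtGraph (f g : ℕ) : SimpleGraph (URTV f g) :=
  SimpleGraph.fromRel (urtRel f g)

/-- The central node of `U_g`. -/
def urtCenter (f : ℕ) : ∀ g, URTV f g
  | 0 => ()
  | g + 1 => Sum.inl (urtCenter f g)

/-- The label `{0, i_1, …, i_n}` of a node of `U_g`: the increasing list of levels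
(creation iterations) of the nodes on the unique path from the central node to the
node.  The central node has label `[0]`; a node created at iteration `g+1` appends
`g+1` to the label of the node it was attached to. -/
def urtLabel (f : ℕ) : ∀ g, URTV f g → List ℕ
  | 0, _ => [0]
  | g + 1, Sum.inl x => urtLabel f g x
  | g + 1, Sum.inr (x, _) => urtLabel f g x ++ [g + 1]

/-- The all-ones matrix `J`. -/
def JMat (V : Type*) : Matrix V V ℝ := Matrix.of fun _ _ => (1 : ℝ)

/-- The Laplacian matrix (over `ℝ`) of a simple graph (all edge weights `1`). -/
noncomputable def glap {V : Type*} [Fintype V] (G : SimpleGraph V) : Matrix V V ℝ := by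
  classical exact SimpleGraph.lapMatrix ℝ G

/-- The pseudoinverse `L† = (L + (1/N)·J)⁻¹ - (1/N)·J` of the graph Laplacian. -/
noncomputable def gdag {V : Type*} [Fintype V] [DecidableEq V] (G : SimpleGraph V) :
    Matrix V V ℝ :=
  (glap G + ((Fintype.card V : ℝ))⁻¹ • JMat V)⁻¹ - ((Fintype.card V : ℝ))⁻¹ • JMat V

def urtDist (f : ℕ) : ∀ g, URTV f g → URTV f g → ℕ
  | 0, _, _ => 0
  | g+1, Sum.inl x, Sum.inl y => urtDist f g x y
  | g+1, Sum.inl x, Sum.inr (y, _) => urtDist f g x y + 1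
  | g+1, Sum.inr (x, _), Sum.inl y => urtDist f g x y + 1
  | g+1, Sum.inr p, Sum.inr q =>
      letI := urtDecEq f g
      if p = q then 0 else urtDist f g p.1 q.1 + 2

lemma urtDist_self (f : ℕ) : ∀ g (x : URTV f g), urtDist f g x x = 0
  | 0, _ => rfl
  | g+1, Sum.inl x => urtDist_self f g x
  | g+1, Sum.inr p => by simp [urtDist]

lemma urtGraph_adj {f g : ℕ} {a b : URTV f g} :
    (urtGraph f g).Adj a b ↔ a ≠ b ∧ (urtRel f g a b ∨ urtRel f g b a) :=
  SimpleGraph.fromRel_adj _ _ _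

def inlHom (f g : ℕ) : urtGraph f g →g urtGraph f (g+1) where
  toFun := Sum.inl
  map_rel' := by
    intro a b h
    rw [urtGraph_adj] at h; apply urtGraph_adj.2
    exact ⟨fun e => h.1 (by injection e), h.2⟩

lemma adj_inl_inr {f g : ℕ} (x : URTV f g) (j : Fin f) :
    (urtGraph f (g+1)).Adj (Sum.inl x) (Sum.inr (x, j)) := by
  apply urtGraph_adj.2
  exact ⟨fun e => by injection e, Or.inl rfl⟩

lemma exists_walk (f : ℕ) : ∀ g (x y : URTV f g),
    ∃ w : (urtGraph f g).Walk x y, w.length = urtDist f g x y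
  | 0, x, y => by
      cases x; cases y; exact ⟨SimpleGraph.Walk.nil, rfl⟩
  | g+1, Sum.inl x, Sum.inl y => by
      obtain ⟨w, hw⟩ := exists_walk f g x y
      exact ⟨w.map (inlHom f g), (SimpleGraph.Walk.length_map _ _).trans hw⟩
  | g+1, Sum.inl x, Sum.inr ⟨y, j⟩ => by
      obtain ⟨w, hw⟩ := exists_walk f g x y
      refine ⟨(w.map (inlHom f g)).concat (adj_inl_inr y j), ?_⟩
      exact (SimpleGraph.Walk.length_concat _ _).trans (congrArg (· + 1) ((SimpleGraph.Walk.length_map _ _).trans hw))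
  | g+1, Sum.inr ⟨x, i⟩, Sum.inl y => by
      obtain ⟨w, hw⟩ := exists_walk f g x y
      refine ⟨SimpleGraph.Walk.cons (adj_inl_inr x i).symm (w.map (inlHom f g)), ?_⟩
      exact (SimpleGraph.Walk.length_cons _ _).trans (congrArg (· + 1) ((SimpleGraph.Walk.length_map _ _).trans hw))
  | g+1, Sum.inr p, Sum.inr q => by
      letI := urtDecEq f g
      by_cases h : p = q
      · subst h
        exact ⟨SimpleGraph.Walk.nil, SimpleGraph.Walk.length_nil.trans (by simp [urtDist])⟩
      · obtain ⟨w, hw⟩ := exists_walk f g p.1 q.1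
        refine ⟨SimpleGraph.Walk.cons (adj_inl_inr p.1 p.2).symm
          ((w.map (inlHom f g)).concat (adj_inl_inr q.1 q.2)), ?_⟩
        exact (SimpleGraph.Walk.length_cons _ _).trans ((congrArg (· + 1) ((SimpleGraph.Walk.length_concat _ _).trans (congrArg (· + 1) ((SimpleGraph.Walk.length_map _ _).trans hw)))).trans (by simp [urtDist, h]))

lemma urtDist_adj_le (f : ℕ) : ∀ g (a b c : URTV f g), (urtGraph f g).Adj a b →
    urtDist f g a c ≤ urtDist f g b c + 1
  | 0, a, b, c, h => by cases a; cases b; exact absurd (urtGraph_adj.1 h).2 (by rintro (h | h) <;> exact h)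
  | g+1, Sum.inl x, Sum.inl z, c, h => by
      have hadj : (urtGraph f g).Adj x z := by
        replace h := urtGraph_adj.1 h; apply urtGraph_adj.2
        refine ⟨fun e => h.1 (by rw [e]), h.2⟩
      cases c with
      | inl y => exact urtDist_adj_le f g x z y hadj
      | inr q =>
          show urtDist f g x q.1 + 1 ≤ urtDist f g z q.1 + 1 + 1
          have := urtDist_adj_le f g x z q.1 hadj
          omega
  | g+1, Sum.inl x, Sum.inr ⟨pz, pj⟩, c, h => by
      have hxp : x = pz := by
        replace h := urtGraph_adj.1 h
        rcases h.2 with h2 | h2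
        · exact h2
        · exact h2.symm
      subst hxp
      letI := urtDecEq f g
      cases c with
      | inl y =>
          show urtDist f g x y ≤ urtDist f g x y + 1 + 1
          omega
      | inr q =>
          show urtDist f g x q.1 + 1 ≤ (if (x, pj) = q then 0 else urtDist f g x q.1 + 2) + 1
          by_cases hq : (x, pj) = q
          · rw [if_pos hq, ← hq]
            simp [urtDist_self]
          · rw [if_neg hq]
            omega
  | g+1, Sum.inr ⟨pz, pj⟩, Sum.inl z, c, h => by
      have hxp : pz = z := by
        replace h := urtGraph_adj.1 h
        rcases h.2 with h2 | h2
        · exact h2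
        · exact h2.symm
      subst hxp
      letI := urtDecEq f g
      cases c with
      | inl y => exact le_rfl
      | inr q =>
          show (if (pz, pj) = q then 0 else urtDist f g pz q.1 + 2) ≤ urtDist f g pz q.1 + 1 + 1
          by_cases hq : (pz, pj) = q
          · rw [if_pos hq]
            omega
          · rw [if_neg hq]
  | g+1, Sum.inr p, Sum.inr q, c, h => by
      exfalso
      replace h := urtGraph_adj.1 h
      rcases h.2 with h2 | h2 <;> exact h2

lemma urtDist_walk_le (f g : ℕ) {a b : URTV f g} (w : (urtGraph f g).Walk a b) :
    urtDist f g a b ≤ w.length := by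
  induction w with
  | nil => simp [urtDist_self]
  | @cons u v c h p ih =>
      have := urtDist_adj_le f g u v c h
      simp only [SimpleGraph.Walk.length_cons]
      omega

lemma urtGraph_dist_eq (f g : ℕ) (a b : URTV f g) :
    (urtGraph f g).dist a b = urtDist f g a b := by
  obtain ⟨w, hw⟩ := exists_walk f g a b
  refine le_antisymm (hw ▸ SimpleGraph.dist_le w) ?_
  obtain ⟨p, hp⟩ := (SimpleGraph.Reachable.exists_walk_length_eq_dist ⟨w⟩)
  exact hp ▸ urtDist_walk_le f g p

lemma urtCard (f : ℕ) : ∀ g, Fintype.card (URTV f g) = (f+1)^g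
  | 0 => rfl
  | g+1 => by
      have e : URTV f (g+1) ≃ (URTV f g ⊕ URTV f g × Fin f) := Equiv.refl _
      rw [Fintype.card_congr e, Fintype.card_sum, Fintype.card_prod, Fintype.card_fin,
        urtCard f g]
      ring

lemma sum_decomp (f g : ℕ) (F : URTV f (g+1) → ℝ) :
    ∑ y : URTV f (g+1), F y
      = ∑ y : URTV f g, F (Sum.inl y) + ∑ p : URTV f g × Fin f, F (Sum.inr p) := by
  calc ∑ y : URTV f (g+1), F y
      = ∑ z : URTV f g ⊕ URTV f g × Fin f, F z :=
        (Fintype.sum_equiv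
          (show (URTV f g ⊕ URTV f g × Fin f) ≃ URTV f (g+1) from Equiv.refl _)
          (fun z => F z) F (fun _ => rfl)).symm
    _ = _ := Fintype.sum_sum_type F

lemma urtLabel_ne_nil (f : ℕ) : ∀ g (x : URTV f g), urtLabel f g x ≠ []
  | 0, _ => by simp [urtLabel]
  | g+1, Sum.inl x => urtLabel_ne_nil f g x
  | g+1, Sum.inr ⟨x, _⟩ => by simp [urtLabel]

lemma aux_pow (c : ℝ) : ∀ g : ℕ, (g : ℝ) * c ^ (g-1) * c = (g : ℝ) * c ^ g
  | 0 => by simp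
  | g+1 => by
      simp only [Nat.add_sub_cancel]
      ring

lemma tail_append {l : List ℕ} (h : l ≠ []) (a : ℕ) : (l ++ [a]).tail = l.tail ++ [a] := by
  cases l with
  | nil => exact absurd rfl h
  | cons b t => simp

lemma urtSum (f : ℕ) : ∀ g (x : URTV f g),
    (∑ y : URTV f g, (urtDist f g x y : ℝ)) =
      (g : ℝ) * f * ((f : ℝ) + 1) ^ (g - 1) +
        ((f : ℝ) + 1) ^ g *
          (((urtLabel f g x).tail.length : ℝ) -
            2 * ((urtLabel f g x).tail.map
              (fun i : ℕ => (((f : ℝ) + 1) ^ i)⁻¹)).sum)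
  | 0, x => by
      cases x
      simp [urtDist, urtLabel]
  | g+1, Sum.inl x => by
      have hS := urtSum f g x
      rw [sum_decomp f g (fun y => (urtDist f (g+1) (Sum.inl x) y : ℝ))]
      have h1 : ∑ y : URTV f g, ((urtDist f (g+1) (Sum.inl x) (Sum.inl y) : ℝ))
          = ∑ y : URTV f g, (urtDist f g x y : ℝ) := rfl
      have h2 : ∑ p : URTV f g × Fin f, ((urtDist f (g+1) (Sum.inl x) (Sum.inr p) : ℝ))
          = (f : ℝ) * (∑ y : URTV f g, (urtDist f g x y : ℝ))
            + (f : ℝ) * ((f : ℝ)+1)^g := by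
        rw [Fintype.sum_prod_type]
        have hstep : ∀ y : URTV f g, ∑ _j : Fin f,
            ((urtDist f (g+1) (Sum.inl x) (Sum.inr (y, _j)) : ℝ))
            = (f : ℝ) * ((urtDist f g x y : ℝ) + 1) := by
          intro y
          have : ∀ _j : Fin f, ((urtDist f (g+1) (Sum.inl x) (Sum.inr (y, _j)) : ℝ))
              = (urtDist f g x y : ℝ) + 1 := by
            intro _j
            show ((urtDist f g x y + 1 : ℕ) : ℝ) = _
            push_cast; ring
          rw [Fintype.sum_congr _ _ this]
          simp [Finset.card_univ]
          ring
        rw [Fintype.sum_congr _ _ hstep, ← Finset.mul_sum, Finset.sum_add_distrib]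
        simp [Finset.card_univ, urtCard f g]
        push_cast
        ring
      rw [h1, h2, hS]
      have hlab : urtLabel f (g+1) (Sum.inl x) = urtLabel f g x := rfl
      rw [hlab]
      simp only [Nat.add_sub_cancel]
      have hp := aux_pow ((f:ℝ)+1) g
      push_cast
      linear_combination (f:ℝ) * hp
  | g+1, Sum.inr p => by
      obtain ⟨x, i⟩ := p
      have hS := urtSum f g x
      letI := urtDecEq f g
      rw [sum_decomp f g (fun y => (urtDist f (g+1) (Sum.inr (x,i)) y : ℝ))]
      have h1 : ∑ y : URTV f g, ((urtDist f (g+1) (Sum.inr (x,i)) (Sum.inl y) : ℝ))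
          = (∑ y : URTV f g, (urtDist f g x y : ℝ)) + ((f : ℝ)+1)^g := by
        have hstep : ∀ y : URTV f g, ((urtDist f (g+1) (Sum.inr (x,i)) (Sum.inl y) : ℝ))
            = (urtDist f g x y : ℝ) + 1 := by
          intro y
          show ((urtDist f g x y + 1 : ℕ) : ℝ) = _
          push_cast; ring
        rw [Fintype.sum_congr _ _ hstep, Finset.sum_add_distrib]
        simp [Finset.card_univ, urtCard f g]
        try (push_cast; ring)
      have h2 : ∑ q : URTV f g × Fin f, ((urtDist f (g+1) (Sum.inr (x,i)) (Sum.inr q) : ℝ))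
          = (f : ℝ) * (∑ y : URTV f g, (urtDist f g x y : ℝ))
            + 2 * (f : ℝ) * ((f : ℝ)+1)^g - 2 := by
        have key : ∀ q : URTV f g × Fin f,
            ((urtDist f (g+1) (Sum.inr (x,i)) (Sum.inr q) : ℝ))
            = ((urtDist f g x q.1 : ℝ) + 2)
              - (if (x,i) = q then (urtDist f g x q.1 : ℝ) + 2 else 0) := by
          intro q
          show (((if (x,i) = q then 0 else urtDist f g x q.1 + 2) : ℕ) : ℝ) = _
          by_cases hq : (x,i) = q
          · rw [if_pos hq, if_pos hq, ← hq]
            simp [urtDist_self]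
          · rw [if_neg hq, if_neg hq]
            push_cast; ring
        rw [Fintype.sum_congr _ _ key, Finset.sum_sub_distrib, Finset.sum_ite_eq]
        simp only [Finset.mem_univ, if_true, urtDist_self, Nat.cast_zero]
        rw [Fintype.sum_prod_type]
        have hstep : ∀ y : URTV f g, ∑ _j : Fin f, ((urtDist f g x y : ℝ) + 2)
            = (f : ℝ) * ((urtDist f g x y : ℝ) + 2) := by
          intro y; simp [Finset.card_univ]; ring
        rw [Fintype.sum_congr _ _ hstep, ← Finset.mul_sum, Finset.sum_add_distrib]
        simp [Finset.card_univ, urtCard f g]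
        try (push_cast; ring)
      rw [h1, h2, hS]
      have hlab : urtLabel f (g+1) (Sum.inr (x,i)) = urtLabel f g x ++ [g+1] := rfl
      rw [hlab, tail_append (urtLabel_ne_nil f g x), List.map_append, List.sum_append,
        List.length_append]
      simp only [List.map_cons, List.map_nil, List.sum_cons, List.sum_nil, List.length_cons,
        List.length_nil, Nat.add_sub_cancel]
      have hz : ((f : ℝ)+1)^(g+1) * (((f:ℝ)+1) ^ (g+1))⁻¹ = 1 :=
        mul_inv_cancel₀ (by positivity)
      have hp := aux_pow ((f:ℝ)+1) g
      push_cast at hz hp ⊢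
      linear_combination (f:ℝ) * hp + 2 * hz

lemma listCast_map (l : List ℕ) :
    (do let a ← l; pure ((a : ℕ) : ℤ)) = l.map (fun a : ℕ => (a : ℤ)) := by
  induction l with
  | nil => rfl
  | cons a t ih => simp only [List.map_cons, ← ih]; rfl

lemma conv_sum (f : ℕ) (l : List ℕ) : ((l.map (fun i => ((f : ℝ) + 1) ^ (-(i : ℤ)))).sum
    = (l.map (fun i : ℕ => (((f:ℝ)+1) ^ i)⁻¹)).sum) := by
  rw [listCast_map, List.map_map]
  congr 1
  ext i
  simp [_root_.zpow_neg]

/-- For a node `x` of the uniform recursive tree `U_g` with label `{0, i_1, …, i_n}`,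
its resistance distance (the sum of resistance distances from `x` to all nodes;
since `U_g` is a tree, resistance distance coincides with shortest-path distance)
equals `r_x(g) = g·f·(f+1)^{g-1} + (f+1)^g·[n - 2·Σ_{k=1}^{n} (f+1)^{-i_k}]`. -/
theorem stmt_17 (f : ℕ) (hf : 1 ≤ f) (g : ℕ) (x : URTV f g) :
    (∑ y : URTV f g, ((urtGraph f g).dist x y : ℝ)) =
      (g : ℝ) * f * ((f : ℝ) + 1) ^ (g - 1) +
        ((f : ℝ) + 1) ^ g *
          (((urtLabel f g x).tail.length : ℝ) -
            2 * ((urtLabel f g x).tail.map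
              (fun i => ((f : ℝ) + 1) ^ (-(i : ℤ)))).sum) := by
  simp only [urtGraph_dist_eq]
  rw [conv_sum f ((urtLabel f g x).tail)]
  exact urtSum f g x
end

section
/- For the uniform recursive tree U_g with branching parameter f, the diagonal entry of the pseudoinverse L†(g) of its Laplacian corresponding to a node x with label {0, i_1, …, i_n} equals L†_{xx}(g) = n − 2·Σ_{k=1}^{n} (f+1)^{−i_k} + 1/(f+1) − (f+1)^{−(g+1)}. -/
open Matrix BigOperators

namespace URTaux

/-- depth of a node -/
def dep (f : ℕ) : ∀ g, URTV f g → ℕ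
  | 0, _ => 0
  | g+1, Sum.inl x => dep f g x
  | _+1, Sum.inr p => dep f _ p.1 + 1

/-- sum of (f+1)^{-i_k} over the label tail -/
noncomputable def sig (f : ℕ) : ∀ g, URTV f g → ℝ
  | 0, _ => 0
  | g+1, Sum.inl x => sig f g x
  | g+1, Sum.inr p => sig f g p.1 + ((f:ℝ)+1) ^ (-(g:ℤ)-1)

/-- depth of the least common ancestor -/
def lcd (f : ℕ) : ∀ g, URTV f g → URTV f g → ℕ
  | 0, _, _ => 0
  | g+1, Sum.inl x, Sum.inl y => lcd f g x y
  | g+1, Sum.inl x, Sum.inr q => lcd f g x q.1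
  | g+1, Sum.inr p, Sum.inl y => lcd f g p.1 y
  | g+1, Sum.inr p, Sum.inr q =>
      letI := urtDecEq f g
      if p = q then dep f g p.1 + 1 else lcd f g p.1 q.1

noncomputable def cc (f g : ℕ) : ℝ :=
  1/((f:ℝ)+1) - ((f:ℝ)+1) ^ (-(g:ℤ)-1) + ((f:ℝ)+1) ^ (-(g:ℤ))

noncomputable def Kmat (f g : ℕ) : Matrix (URTV f g) (URTV f g) ℝ :=
  Matrix.of fun x y => (lcd f g x y : ℝ) - sig f g x - sig f g y + cc f g

def Jr (α β : Type*) : Matrix α β ℝ := Matrix.of fun _ _ => 1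

noncomputable def Mmat (f g : ℕ) : Matrix (URTV f g) (URTV f g) ℝ :=
  glap (urtGraph f g) + ((Fintype.card (URTV f g) : ℝ))⁻¹ • JMat (URTV f g)

def Bmat (f g : ℕ) : Matrix (URTV f g) (URTV f g × Fin f) ℝ :=
  Matrix.of fun x p => if x = p.1 then 1 else 0

lemma lcd_self (f : ℕ) : ∀ g (x : URTV f g), lcd f g x x = dep f g x
  | 0, _ => rfl
  | g+1, Sum.inl x => lcd_self f g x
  | g+1, Sum.inr p => by simp [lcd, dep]

lemma card_urtv (f : ℕ) : ∀ g, Fintype.card (URTV f g) = (f+1)^g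
  | 0 => rfl
  | g+1 => by
    have h : Fintype.card (URTV f g ⊕ (URTV f g × Fin f)) = (f+1)^(g+1) := by
      rw [Fintype.card_sum, Fintype.card_prod, Fintype.card_fin, card_urtv f g]
      ring
    exact h

end URTaux
namespace URTaux

lemma label_ne_nil (f : ℕ) : ∀ g (x : URTV f g), urtLabel f g x ≠ []
  | 0, _ => by simp [urtLabel]
  | g+1, Sum.inl x => label_ne_nil f g x
  | g+1, Sum.inr p => by simp [urtLabel]

lemma tail_append_singleton {l : List ℕ} (h : l ≠ []) (a : ℕ) :
    (l ++ [a]).tail = l.tail ++ [a] := by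
  cases l with
  | nil => exact absurd rfl h
  | cons b t => simp

lemma label_inr (f g : ℕ) (p : URTV f g × Fin f) :
    urtLabel f (g+1) (Sum.inr p) = urtLabel f g p.1 ++ [g+1] := rfl

lemma label_inl (f g : ℕ) (x : URTV f g) :
    urtLabel f (g+1) (Sum.inl x) = urtLabel f g x := rfl

lemma tail_length (f : ℕ) : ∀ g (x : URTV f g),
    (urtLabel f g x).tail.length = dep f g x
  | 0, _ => rfl
  | g+1, Sum.inl x => tail_length f g x
  | g+1, Sum.inr p => by
    rw [label_inr, tail_append_singleton (label_ne_nil f g p.1)]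
    simp [tail_length f g p.1, dep]

lemma map_sum_append (f : ℕ) (l : List ℕ) (a : ℕ) :
    (((l++[a]).map (fun i => ((f : ℝ) + 1) ^ (-(i : ℤ))))).sum
      = ((l.map (fun i => ((f : ℝ) + 1) ^ (-(i : ℤ)))).sum) + ((f : ℝ) + 1) ^ (-(a : ℤ)) := by
  simp

lemma tail_sum (f : ℕ) : ∀ g (x : URTV f g),
    ((urtLabel f g x).tail.map (fun i => ((f : ℝ) + 1) ^ (-(i : ℤ)))).sum
      = sig f g x
  | 0, _ => rfl
  | g+1, Sum.inl x => tail_sum f g x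
  | g+1, Sum.inr p => by
    rw [label_inr, tail_append_singleton (label_ne_nil f g p.1),
      map_sum_append, tail_sum f g p.1]
    show _ = sig f g p.1 + ((f:ℝ)+1) ^ (-(g:ℤ)-1)
    congr 1
    push_cast
    ring_nf

end URTaux
namespace URTaux

lemma adj_inl_inl (f g : ℕ) (x y : URTV f g) :
    (urtGraph f (g+1)).Adj (Sum.inl x) (Sum.inl y) ↔ (urtGraph f g).Adj x y := by
  simp only [urtGraph, SimpleGraph.fromRel_adj]
  constructor
  · rintro ⟨hne, h⟩
    refine ⟨fun hxy => hne (by rw [hxy]), ?_⟩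
    exact h
  · rintro ⟨hne, h⟩
    refine ⟨fun hxy => hne (Sum.inl_injective hxy), h⟩

lemma adj_inl_inr (f g : ℕ) (x : URTV f g) (q : URTV f g × Fin f) :
    (urtGraph f (g+1)).Adj (Sum.inl x) (Sum.inr q) ↔ x = q.1 := by
  simp only [urtGraph, SimpleGraph.fromRel_adj]
  constructor
  · rintro ⟨-, h | h⟩
    · exact h
    · exact h.symm
  · intro h
    exact ⟨Sum.inl_ne_inr, Or.inl h⟩

lemma adj_inr_inr (f g : ℕ) (p q : URTV f g × Fin f) :
    ¬ (urtGraph f (g+1)).Adj (Sum.inr p) (Sum.inr q) := by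
  simp only [urtGraph, SimpleGraph.fromRel_adj]
  rintro ⟨-, h | h⟩ <;> exact h

end URTaux

namespace URTaux
open scoped Classical

lemma deg_filter {V : Type*} [Fintype V] (G : SimpleGraph V) [DecidableRel G.Adj] (v : V) :
    G.degree v = ∑ u : V, if G.Adj v u then 1 else 0 := by
  classical
  show (G.neighborFinset v).card = _
  rw [SimpleGraph.neighborFinset_eq_filter, Finset.card_filter]

lemma deg_inl (f g : ℕ) (x : URTV f g) :
    (urtGraph f (g+1)).degree (Sum.inl x) = (urtGraph f g).degree x + f := by
  classical
  erw [deg_filter (urtGraph f (g+1)) (Sum.inl x), deg_filter]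
  have h2 : (∑ u : URTV f (g+1), if (urtGraph f (g+1)).Adj (Sum.inl x) u then 1 else 0)
      = (∑ u : URTV f g, if (urtGraph f (g+1)).Adj (Sum.inl x) (Sum.inl u) then 1 else 0)
        + ∑ p : URTV f g × Fin f,
            if (urtGraph f (g+1)).Adj (Sum.inl x) (Sum.inr p) then 1 else 0 := by
    exact Fintype.sum_sum_type _
  rw [h2]
  congr 1
  · exact Finset.sum_congr rfl fun u _ => by rw [if_congr (adj_inl_inl f g x u) rfl rfl]
  · have : ∀ p : URTV f g × Fin f,
        (if (urtGraph f (g+1)).Adj (Sum.inl x) (Sum.inr p) then (1:ℕ) else 0)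
          = if x = p.1 then 1 else 0 := fun p => by
      rw [if_congr (adj_inl_inr f g x p) rfl rfl]
    simp only [this]
    rw [Fintype.sum_prod_type]
    simp [apply_ite Finset.card, Finset.sum_ite_eq]

lemma deg_inr (f g : ℕ) (p : URTV f g × Fin f) :
    (urtGraph f (g+1)).degree (Sum.inr p) = 1 := by
  classical
  erw [deg_filter (urtGraph f (g+1)) (Sum.inr p)]
  have h2 : (∑ u : URTV f (g+1), if (urtGraph f (g+1)).Adj (Sum.inr p) u then 1 else 0)
      = (∑ u : URTV f g, if (urtGraph f (g+1)).Adj (Sum.inr p) (Sum.inl u) then 1 else 0)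
        + ∑ q : URTV f g × Fin f,
            if (urtGraph f (g+1)).Adj (Sum.inr p) (Sum.inr q) then 1 else 0 := by
    exact Fintype.sum_sum_type _
  rw [h2]
  have e1 : ∀ u : URTV f g,
      (if (urtGraph f (g+1)).Adj (Sum.inr p) (Sum.inl u) then (1:ℕ) else 0)
        = if p.1 = u then 1 else 0 := fun u => by
    refine if_congr ?_ rfl rfl
    erw [(urtGraph f (g+1)).adj_comm, adj_inl_inr f g u p]
    exact eq_comm
  have e2 : ∀ q : URTV f g × Fin f,
      (if (urtGraph f (g+1)).Adj (Sum.inr p) (Sum.inr q) then (1:ℕ) else 0) = 0 := fun q => by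
    rw [if_neg (adj_inr_inr f g p q)]
  simp only [e1, e2]
  simp [Finset.sum_ite_eq]

end URTaux
namespace URTaux
open scoped Classical

lemma glap_eq {V : Type*} [Fintype V] (G : SimpleGraph V) [inst : DecidableRel G.Adj] :
    glap G = G.lapMatrix ℝ := by
  unfold glap
  congr!

lemma glap_apply {V : Type*} [Fintype V] [DecidableEq V] (G : SimpleGraph V)
    [DecidableRel G.Adj] (a b : V) :
    glap G a b = (if a = b then (G.degree a : ℝ) else 0) - (if G.Adj a b then 1 else 0) := by
  rw [glap_eq]
  simp [SimpleGraph.lapMatrix, SimpleGraph.degMatrix, Matrix.diagonal_apply,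
    Matrix.sub_apply]

lemma glap_succ (f g : ℕ) :
    glap (urtGraph f (g+1)) =
      Matrix.fromBlocks (glap (urtGraph f g) + (f:ℝ) • 1) (-(Bmat f g)) (-(Bmat f g)ᵀ) 1 := by
  ext a b
  cases a with
  | inl x =>
    cases b with
    | inl y =>
      rw [glap_apply (urtGraph f (g+1)) (Sum.inl x) (Sum.inl y)]
      show _ = (glap (urtGraph f g) + (f:ℝ) • 1) x y
      rw [Matrix.add_apply, glap_apply, Matrix.smul_apply, Matrix.one_apply]
      erw [if_congr (Sum.inl.injEq x y ▸ Iff.rfl : (Sum.inl x = Sum.inl y) ↔ x = y) rfl rfl,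
        if_congr (adj_inl_inl f g x y) rfl rfl, deg_inl]
      by_cases hxy : x = y <;> simp [hxy]
    | inr q =>
      rw [glap_apply (urtGraph f (g+1)) (Sum.inl x) (Sum.inr q)]
      show _ = (-(Bmat f g)) x q
      rw [if_neg (by simp), if_congr (adj_inl_inr f g x q) rfl rfl]
      simp [Bmat]
  | inr p =>
    cases b with
    | inl y =>
      rw [glap_apply (urtGraph f (g+1)) (Sum.inr p) (Sum.inl y)]
      show _ = (-(Bmat f g)ᵀ) p y
      have hadj : (urtGraph f (g+1)).Adj (Sum.inr p) (Sum.inl y) ↔ y = p.1 := by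
        erw [(urtGraph f (g+1)).adj_comm, adj_inl_inr f g y p]
      rw [if_neg (by simp), if_congr hadj rfl rfl]
      simp [Bmat]
    | inr q =>
      rw [glap_apply (urtGraph f (g+1)) (Sum.inr p) (Sum.inr q)]
      show _ = (1 : Matrix _ _ ℝ) p q
      erw [if_congr (Sum.inr.injEq p q ▸ Iff.rfl : (Sum.inr p = Sum.inr q) ↔ p = q) rfl rfl,
        if_neg (adj_inr_inr f g p q), deg_inr, Matrix.one_apply]
      by_cases hpq : p = q <;> simp [hpq]

end URTaux
namespace URTaux
open scoped Classical

lemma JMat_succ (f g : ℕ) :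
    JMat (URTV f (g+1)) =
      Matrix.fromBlocks (Jr (URTV f g) (URTV f g)) (Jr (URTV f g) (URTV f g × Fin f))
        (Jr (URTV f g × Fin f) (URTV f g)) (Jr (URTV f g × Fin f) (URTV f g × Fin f)) := by
  ext a b
  cases a <;> cases b <;> rfl

lemma one_succ (f g : ℕ) :
    (1 : Matrix (URTV f (g+1)) (URTV f (g+1)) ℝ) =
      Matrix.fromBlocks 1 0 0 (1 : Matrix (URTV f g × Fin f) (URTV f g × Fin f) ℝ) := by
  exact (Matrix.fromBlocks_one).symm

lemma Mmat_succ (f g : ℕ) :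
    Mmat f (g+1) =
      Matrix.fromBlocks
        (glap (urtGraph f g) + (f:ℝ) • 1 + ((Fintype.card (URTV f (g+1)) : ℝ))⁻¹ • Jr (URTV f g) (URTV f g))
        (-(Bmat f g) + ((Fintype.card (URTV f (g+1)) : ℝ))⁻¹ • Jr (URTV f g) (URTV f g × Fin f))
        (-(Bmat f g)ᵀ + ((Fintype.card (URTV f (g+1)) : ℝ))⁻¹ • Jr (URTV f g × Fin f) (URTV f g))
        (1 + ((Fintype.card (URTV f (g+1)) : ℝ))⁻¹ • Jr (URTV f g × Fin f) (URTV f g × Fin f)) := by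
  rw [Mmat, glap_succ, JMat_succ]
  ext a b
  cases a <;> cases b <;> rfl

lemma Kmat_succ (f g : ℕ) :
    Kmat f (g+1) =
      Matrix.fromBlocks
        (Kmat f g + (cc f (g+1) - cc f g) • Jr (URTV f g) (URTV f g))
        (Kmat f g * Bmat f g + (cc f (g+1) - cc f g - ((f:ℝ)+1) ^ (-(g:ℤ)-1)) • Jr (URTV f g) (URTV f g × Fin f))
        ((Bmat f g)ᵀ * Kmat f g + (cc f (g+1) - cc f g - ((f:ℝ)+1) ^ (-(g:ℤ)-1)) • Jr (URTV f g × Fin f) (URTV f g))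
        ((Bmat f g)ᵀ * (Kmat f g * Bmat f g) + (cc f (g+1) - cc f g - 2*(((f:ℝ)+1) ^ (-(g:ℤ)-1))) • Jr (URTV f g × Fin f) (URTV f g × Fin f) + 1) := by
  have hKB : ∀ (x : URTV f g) (q : URTV f g × Fin f),
      (Kmat f g * Bmat f g) x q = Kmat f g x q.1 := by
    intro x q
    rw [Matrix.mul_apply]
    simp [Bmat, Finset.sum_ite_eq]
  have hBK : ∀ (p : URTV f g × Fin f) (y : URTV f g),
      ((Bmat f g)ᵀ * Kmat f g) p y = Kmat f g p.1 y := by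
    intro p y
    rw [Matrix.mul_apply]
    simp [Bmat, Finset.sum_ite_eq, Matrix.transpose_apply]
  have hBKB : ∀ (p q : URTV f g × Fin f),
      ((Bmat f g)ᵀ * (Kmat f g * Bmat f g)) p q = Kmat f g p.1 q.1 := by
    intro p q
    rw [Matrix.mul_apply]
    simp [Bmat, Finset.sum_ite_eq, Matrix.transpose_apply]
    exact hKB p.1 q
  ext a b
  cases a with
  | inl x =>
    cases b with
    | inl y =>
      show Kmat f (g+1) (Sum.inl x) (Sum.inl y) = Kmat f g x y + (cc f (g+1) - cc f g) * 1
      simp only [Kmat, Matrix.of_apply]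
      show ((lcd f g x y : ℝ)) - sig f g x - sig f g y + cc f (g+1) = _
      ring
    | inr q =>
      show Kmat f (g+1) (Sum.inl x) (Sum.inr q)
          = (Kmat f g * Bmat f g) x q + (cc f (g+1) - cc f g - ((f:ℝ)+1) ^ (-(g:ℤ)-1)) * 1
      rw [hKB]
      simp only [Kmat, Matrix.of_apply]
      show ((lcd f g x q.1 : ℝ)) - sig f g x - (sig f g q.1 + ((f:ℝ)+1) ^ (-(g:ℤ)-1)) + cc f (g+1) = _
      ring
  | inr p =>
    cases b with
    | inl y =>
      show Kmat f (g+1) (Sum.inr p) (Sum.inl y)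
          = ((Bmat f g)ᵀ * Kmat f g) p y + (cc f (g+1) - cc f g - ((f:ℝ)+1) ^ (-(g:ℤ)-1)) * 1
      rw [hBK]
      simp only [Kmat, Matrix.of_apply]
      show ((lcd f g p.1 y : ℝ)) - (sig f g p.1 + ((f:ℝ)+1) ^ (-(g:ℤ)-1)) - sig f g y + cc f (g+1) = _
      ring
    | inr q =>
      show Kmat f (g+1) (Sum.inr p) (Sum.inr q)
          = ((Bmat f g)ᵀ * (Kmat f g * Bmat f g)) p q
            + (cc f (g+1) - cc f g - 2*(((f:ℝ)+1) ^ (-(g:ℤ)-1))) * 1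
            + (1 : Matrix (URTV f g × Fin f) (URTV f g × Fin f) ℝ) p q
      rw [hBKB]
      simp only [Kmat, Matrix.of_apply]
      by_cases hpq : p = q
      · subst hpq
        rw [Matrix.one_apply_eq]
        show ((if p = p then dep f g p.1 + 1 else lcd f g p.1 p.1 : ℕ) : ℝ)
            - (sig f g p.1 + ((f:ℝ)+1) ^ (-(g:ℤ)-1)) - (sig f g p.1 + ((f:ℝ)+1) ^ (-(g:ℤ)-1))
            + cc f (g+1) = _
        rw [if_pos rfl, lcd_self]
        push_cast
        ring
      · rw [Matrix.one_apply_ne hpq]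
        show ((if p = q then dep f g p.1 + 1 else lcd f g p.1 q.1 : ℕ) : ℝ)
            - (sig f g p.1 + ((f:ℝ)+1) ^ (-(g:ℤ)-1)) - (sig f g q.1 + ((f:ℝ)+1) ^ (-(g:ℤ)-1))
            + cc f (g+1) = _
        rw [if_neg hpq]
        ring

end URTaux
namespace URTaux
open scoped Classical

lemma Jr_mul_Jr (α β γ : Type*) [Fintype α] [Fintype β] [Fintype γ] :
    Jr α β * Jr β γ = (Fintype.card β : ℝ) • Jr α γ := by
  ext a c
  simp [Jr, Matrix.mul_apply, Matrix.smul_apply, Finset.card_univ]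

lemma B_mul_Bt (f g : ℕ) : Bmat f g * (Bmat f g)ᵀ = (f:ℝ) • 1 := by
  ext x y
  rw [Matrix.mul_apply, Fintype.sum_prod_type]
  simp only [Bmat, Matrix.transpose_apply, Matrix.of_apply, ite_mul, one_mul, zero_mul]
  by_cases h : x = y
  · subst h
    simp [Finset.sum_ite_eq, Matrix.one_apply]
  · rw [Matrix.smul_apply, Matrix.one_apply_ne h, smul_zero]
    apply Finset.sum_eq_zero
    intro z _
    apply Finset.sum_eq_zero
    intro j _
    by_cases hx : x = z
    · subst hx
      rw [if_pos rfl, if_neg (fun hy : y = x => h hy.symm)]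
    · rw [if_neg hx]

lemma B_mul_BtX (f g : ℕ) {γ : Type*} [Fintype γ] (X : Matrix (URTV f g) γ ℝ) :
    Bmat f g * ((Bmat f g)ᵀ * X) = (f:ℝ) • X := by
  rw [← Matrix.mul_assoc, B_mul_Bt, Matrix.smul_mul, Matrix.one_mul]

lemma B_mul_Jr (f g : ℕ) (γ : Type*) [Fintype γ] :
    Bmat f g * Jr (URTV f g × Fin f) γ = (f:ℝ) • Jr (URTV f g) γ := by
  ext x c
  rw [Matrix.mul_apply, Fintype.sum_prod_type]
  simp [Bmat, Jr, apply_ite Finset.card, apply_ite (Nat.cast (R:=ℝ)), Finset.sum_ite_eq]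

lemma Jr_mul_B (f g : ℕ) (γ : Type*) [Fintype γ] :
    Jr γ (URTV f g) * Bmat f g = Jr γ (URTV f g × Fin f) := by
  ext c q
  rw [Matrix.mul_apply]
  simp [Bmat, Jr, Finset.sum_ite_eq]

lemma Bt_mul_Jr (f g : ℕ) (γ : Type*) [Fintype γ] :
    (Bmat f g)ᵀ * Jr (URTV f g) γ = Jr (URTV f g × Fin f) γ := by
  ext p c
  rw [Matrix.mul_apply]
  simp [Bmat, Jr, Matrix.transpose_apply, Finset.sum_ite_eq]

lemma Jr_mul_Bt (f g : ℕ) (γ : Type*) [Fintype γ] :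
    Jr γ (URTV f g × Fin f) * (Bmat f g)ᵀ = (f:ℝ) • Jr γ (URTV f g) := by
  ext c y
  rw [Matrix.mul_apply, Fintype.sum_prod_type]
  simp [Bmat, Jr, Matrix.transpose_apply, Finset.sum_ite_eq]

lemma Jr_mul_BtX (f g : ℕ) {γ γ' : Type*} [Fintype γ] [Fintype γ']
    (X : Matrix (URTV f g) γ' ℝ) :
    Jr γ (URTV f g × Fin f) * ((Bmat f g)ᵀ * X) = (f:ℝ) • (Jr γ (URTV f g) * X) := by
  rw [← Matrix.mul_assoc, Jr_mul_Bt, Matrix.smul_mul]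

lemma glap_mul_Jr {V : Type*} [Fintype V] (G : SimpleGraph V) (γ : Type*) [Fintype γ] :
    glap G * Jr V γ = 0 := by
  classical
  ext x c
  rw [Matrix.mul_apply]
  have h := congrFun (SimpleGraph.lapMatrix_mulVec_const_eq_zero (R := ℝ) (G := G)) x
  simp only [Matrix.mulVec, dotProduct, mul_one, Pi.zero_apply] at h
  simp only [Jr, Matrix.of_apply, mul_one, Matrix.zero_apply]
  rw [glap_eq]
  exact h

lemma glap_symm {V : Type*} [Fintype V] (G : SimpleGraph V) : (glap G)ᵀ = glap G := by
  classical
  rw [glap_eq]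
  exact SimpleGraph.isSymm_lapMatrix ℝ G

lemma Jr_mul_glap {V : Type*} [Fintype V] (G : SimpleGraph V) (γ : Type*) [Fintype γ] :
    Jr γ V * glap G = 0 := by
  have h := congrArg Matrix.transpose (glap_mul_Jr G γ)
  rwa [Matrix.transpose_mul, Matrix.transpose_zero,
    show (Jr V γ)ᵀ = Jr γ V from rfl, glap_symm] at h

end URTaux
namespace URTaux
open scoped Classical

lemma blocks_eq_one {o n : Type*} [Fintype o] [Fintype n] [DecidableEq o] [DecidableEq n]
    (M11 : Matrix o o ℝ) (M12 : Matrix o n ℝ) (M21 : Matrix n o ℝ) (M22 : Matrix n n ℝ)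
    (K11 : Matrix o o ℝ) (K12 : Matrix o n ℝ) (K21 : Matrix n o ℝ) (K22 : Matrix n n ℝ)
    (h11 : M11 * K11 + M12 * K21 = 1) (h12 : M11 * K12 + M12 * K22 = 0)
    (h21 : M21 * K11 + M22 * K21 = 0) (h22 : M21 * K12 + M22 * K22 = 1) :
    Matrix.fromBlocks M11 M12 M21 M22 * Matrix.fromBlocks K11 K12 K21 K22 = 1 := by
  rw [Matrix.fromBlocks_multiply, h11, h12, h21, h22, Matrix.fromBlocks_one]

lemma cardo_ne (f g : ℕ) : (Fintype.card (URTV f g) : ℝ) ≠ 0 := by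
  rw [card_urtv]
  positivity

lemma J_mul_M (f g : ℕ) :
    Jr (URTV f g) (URTV f g) * Mmat f g = Jr (URTV f g) (URTV f g) := by
  rw [Mmat, Matrix.mul_add, Matrix.mul_smul, show JMat (URTV f g) = Jr (URTV f g) (URTV f g) from rfl,
    Jr_mul_glap, Jr_mul_Jr, zero_add, smul_smul, inv_mul_cancel₀ (cardo_ne f g), one_smul]

lemma J_mul_K (f g : ℕ) (ih : Mmat f g * Kmat f g = 1) :
    Jr (URTV f g) (URTV f g) * Kmat f g = Jr (URTV f g) (URTV f g) := by
  calc Jr (URTV f g) (URTV f g) * Kmat f g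
      = (Jr (URTV f g) (URTV f g) * Mmat f g) * Kmat f g := by rw [J_mul_M]
    _ = Jr (URTV f g) (URTV f g) * (Mmat f g * Kmat f g) := by rw [Matrix.mul_assoc]
    _ = _ := by rw [ih, Matrix.mul_one]

lemma col_sum (f g : ℕ) (ih : Mmat f g * Kmat f g = 1) (y : URTV f g) :
    ∑ z, Kmat f g z y = 1 := by
  have h := congrFun (congrFun (J_mul_K f g ih) (urtCenter f g)) y
  rw [Matrix.mul_apply] at h
  simpa [Jr] using h

lemma Jr_mul_K (f g : ℕ) (ih : Mmat f g * Kmat f g = 1) (γ : Type*) [Fintype γ] :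
    Jr γ (URTV f g) * Kmat f g = Jr γ (URTV f g) := by
  ext c y
  rw [Matrix.mul_apply]
  simp only [Jr, Matrix.of_apply, one_mul]
  exact col_sum f g ih y

lemma Jr_mul_KB (f g : ℕ) (ih : Mmat f g * Kmat f g = 1) (γ : Type*) [Fintype γ] :
    Jr γ (URTV f g) * (Kmat f g * Bmat f g) = Jr γ (URTV f g × Fin f) := by
  rw [← Matrix.mul_assoc, Jr_mul_K f g ih, Jr_mul_B]

lemma L_mul_K (f g : ℕ) (ih : Mmat f g * Kmat f g = 1) :
    glap (urtGraph f g) * Kmat f g =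
      1 - ((Fintype.card (URTV f g) : ℝ))⁻¹ • Jr (URTV f g) (URTV f g) := by
  have h : glap (urtGraph f g) * Kmat f g
      = Mmat f g * Kmat f g
        - ((Fintype.card (URTV f g) : ℝ))⁻¹ • (JMat (URTV f g) * Kmat f g) := by
    rw [Mmat, Matrix.add_mul, Matrix.smul_mul]
    abel
  rw [h, ih, show JMat (URTV f g) = Jr (URTV f g) (URTV f g) from rfl, J_mul_K f g ih]

lemma L_mul_KB (f g : ℕ) (ih : Mmat f g * Kmat f g = 1) :
    glap (urtGraph f g) * (Kmat f g * Bmat f g) =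
      Bmat f g - ((Fintype.card (URTV f g) : ℝ))⁻¹ • Jr (URTV f g) (URTV f g × Fin f) := by
  rw [← Matrix.mul_assoc, L_mul_K f g ih, Matrix.sub_mul, Matrix.one_mul, Matrix.smul_mul,
    Jr_mul_B]

end URTaux
namespace URTaux
open scoped Classical

lemma MK_base (f : ℕ) : Mmat f 0 * Kmat f 0 = 1 := by
  have hsub : ∀ a b : URTV f 0, a = b := fun _ _ => rfl
  have hadj : ∀ a b : URTV f 0, ¬ (urtGraph f 0).Adj a b := by
    intro a b h
    exact h.ne (hsub a b)
  have hglap : glap (urtGraph f 0) = 0 := by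
    ext a b
    rw [glap_apply]
    have hdeg : (urtGraph f 0).degree a = 0 := by
      rw [deg_filter]
      simp [hadj]
    rw [if_neg (hadj a b), hdeg]
    simp
  have hcc : cc f 0 = 1 := by
    have hF : ((f:ℝ)+1) ≠ 0 := by positivity
    simp [cc, zpow_sub₀ hF, _root_.zpow_neg, one_div]
  have hK : Kmat f 0 = 1 := by
    ext a b
    have hab : a = b := hsub a b
    subst hab
    rw [Matrix.one_apply_eq]
    show ((lcd f 0 a a : ℕ) : ℝ) - sig f 0 a - sig f 0 a + cc f 0 = 1
    show ((0 : ℕ) : ℝ) - 0 - 0 + cc f 0 = 1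
    rw [hcc]
    norm_num
  have hcard : (Fintype.card (URTV f 0) : ℝ) = 1 := by rw [card_urtv]; norm_num
  rw [Mmat, hglap, hK, Matrix.mul_one, zero_add, hcard]
  ext a b
  have hab : a = b := hsub a b
  subst hab
  simp [JMat, Matrix.one_apply_eq]

set_option maxHeartbeats 2000000 in
lemma MK_step (f g : ℕ) (ih : Mmat f g * Kmat f g = 1) :
    Mmat f (g+1) * Kmat f (g+1) = 1 := by
  have hF : ((f:ℝ)+1) ≠ 0 := by positivity
  have hw : ((f:ℝ)+1)^g ≠ 0 := pow_ne_zero _ hF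
  have hcardo : (Fintype.card (URTV f g) : ℝ) = ((f:ℝ)+1)^g := by
    rw [card_urtv]; push_cast; ring
  have hcardn : (Fintype.card (URTV f g × Fin f) : ℝ) = (f:ℝ) * ((f:ℝ)+1)^g := by
    rw [Fintype.card_prod, Fintype.card_fin, card_urtv]; push_cast; ring
  have hcard1 : (Fintype.card (URTV f (g+1)) : ℝ) = ((f:ℝ)+1)^g * ((f:ℝ)+1) := by
    rw [card_urtv]; push_cast; rw [pow_succ]
  have hJoK := Jr_mul_K f g ih (URTV f g)
  have hJnK := Jr_mul_K f g ih (URTV f g × Fin f)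
  have hJoKB := Jr_mul_KB f g ih (URTV f g)
  have hJnKB := Jr_mul_KB f g ih (URTV f g × Fin f)
  have hLK := L_mul_K f g ih
  have hLKB := L_mul_KB f g ih
  rw [Mmat_succ, Kmat_succ]
  apply blocks_eq_one
  · simp only [Matrix.add_mul, Matrix.mul_add, Matrix.neg_mul, Matrix.smul_mul,
      Matrix.mul_smul, Matrix.one_mul, Matrix.mul_one, Matrix.mul_assoc,
      hLK, hJoK, hJnK, hJoKB, hJnKB, hLKB, glap_mul_Jr, Jr_mul_Jr, B_mul_BtX, B_mul_Jr,
      Jr_mul_B, Bt_mul_Jr, Jr_mul_Bt, Jr_mul_BtX, smul_zero, add_zero, zero_add, smul_smul]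
    ext x y
    simp only [Matrix.add_apply, Matrix.sub_apply, Matrix.neg_apply, Matrix.smul_apply,
      Jr, Matrix.of_apply, smul_eq_mul, cc, hcardo, hcardn, hcard1,
      zpow_sub₀ hF, _root_.zpow_neg, zpow_natCast, zpow_one, pow_succ, mul_one, one_div]
    field_simp
    ring
  · simp only [Matrix.add_mul, Matrix.mul_add, Matrix.neg_mul, Matrix.smul_mul,
      Matrix.mul_smul, Matrix.one_mul, Matrix.mul_one, Matrix.mul_assoc,
      hLK, hJoK, hJnK, hJoKB, hJnKB, hLKB, glap_mul_Jr, Jr_mul_Jr, B_mul_BtX, B_mul_Jr,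
      Jr_mul_B, Bt_mul_Jr, Jr_mul_Bt, Jr_mul_BtX, smul_zero, add_zero, zero_add, smul_smul]
    ext x y
    simp only [Matrix.add_apply, Matrix.sub_apply, Matrix.neg_apply, Matrix.smul_apply,
      Jr, Matrix.of_apply, smul_eq_mul, cc, hcardo, hcardn, hcard1,
      zpow_sub₀ hF, _root_.zpow_neg, zpow_natCast, zpow_one, pow_succ, mul_one, one_div]
    field_simp
    simp only [Matrix.zero_apply]
    ring
  · simp only [Matrix.add_mul, Matrix.mul_add, Matrix.neg_mul, Matrix.smul_mul,
      Matrix.mul_smul, Matrix.one_mul, Matrix.mul_one, Matrix.mul_assoc,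
      hLK, hJoK, hJnK, hJoKB, hJnKB, hLKB, glap_mul_Jr, Jr_mul_Jr, B_mul_BtX, B_mul_Jr,
      Jr_mul_B, Bt_mul_Jr, Jr_mul_Bt, Jr_mul_BtX, smul_zero, add_zero, zero_add, smul_smul]
    ext x y
    simp only [Matrix.add_apply, Matrix.sub_apply, Matrix.neg_apply, Matrix.smul_apply,
      Jr, Matrix.of_apply, smul_eq_mul, cc, hcardo, hcardn, hcard1,
      zpow_sub₀ hF, _root_.zpow_neg, zpow_natCast, zpow_one, pow_succ, mul_one, one_div]
    field_simp
    simp only [Matrix.zero_apply]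
    ring
  · simp only [Matrix.add_mul, Matrix.mul_add, Matrix.neg_mul, Matrix.smul_mul,
      Matrix.mul_smul, Matrix.one_mul, Matrix.mul_one, Matrix.mul_assoc,
      hLK, hJoK, hJnK, hJoKB, hJnKB, hLKB, glap_mul_Jr, Jr_mul_Jr, B_mul_BtX, B_mul_Jr,
      Jr_mul_B, Bt_mul_Jr, Jr_mul_Bt, Jr_mul_BtX, smul_zero, add_zero, zero_add, smul_smul]
    ext x y
    simp only [Matrix.add_apply, Matrix.sub_apply, Matrix.neg_apply, Matrix.smul_apply,
      Jr, Matrix.of_apply, smul_eq_mul, cc, hcardo, hcardn, hcard1,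
      zpow_sub₀ hF, _root_.zpow_neg, zpow_natCast, zpow_one, pow_succ, mul_one, one_div]
    field_simp
    ring

end URTaux
namespace URTaux

lemma MK (f : ℕ) : ∀ g, Mmat f g * Kmat f g = 1
  | 0 => MK_base f
  | g+1 => MK_step f g (MK f g)

theorem stmt_18_aux (f : ℕ) (hf : 1 ≤ f) (g : ℕ) (x : URTV f g) :
    gdag (urtGraph f g) x x =
      ((urtLabel f g x).tail.length : ℝ) -
        2 * ((urtLabel f g x).tail.map (fun i => ((f : ℝ) + 1) ^ (-(i : ℤ)))).sum +
        1 / ((f : ℝ) + 1) - ((f : ℝ) + 1) ^ (-((g : ℤ) + 1)) := by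
  have hF : ((f:ℝ)+1) ≠ 0 := by positivity
  have hinv : (Mmat f g)⁻¹ = Kmat f g := Matrix.inv_eq_right_inv (MK f g)
  have h2 : gdag (urtGraph f g)
      = Kmat f g - ((Fintype.card (URTV f g) : ℝ))⁻¹ • JMat (URTV f g) := by
    rw [gdag, show (glap (urtGraph f g)
      + ((Fintype.card (URTV f g) : ℝ))⁻¹ • JMat (URTV f g)) = Mmat f g from rfl, hinv]
  rw [h2, tail_length f g x, tail_sum f g x, Matrix.sub_apply, Matrix.smul_apply]
  show (lcd f g x x : ℝ) - sig f g x - sig f g x + cc f g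
      - (Fintype.card (URTV f g) : ℝ)⁻¹ * 1 = _
  rw [lcd_self, cc, card_urtv]
  have e0 : ((f:ℝ)+1) ^ (-(g:ℤ)) = (((f+1:ℕ) : ℝ)^g)⁻¹ := by
    rw [_root_.zpow_neg, zpow_natCast]; push_cast; ring
  have e1 : ((f:ℝ)+1) ^ (-(g:ℤ)-1) = ((f:ℝ)+1) ^ (-((g:ℤ)+1)) := by
    congr 1
    ring
  rw [e1]
  have : (((f+1)^g : ℕ) : ℝ)⁻¹ = ((f:ℝ)+1) ^ (-(g:ℤ)) := by
    rw [e0]; push_cast; ring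
  rw [this]
  ring

end URTaux
/-- For the uniform recursive tree `U_g` with branching parameter `f`, the diagonal
entry of the pseudoinverse `L†(g)` of its Laplacian corresponding to a node `x`
with label `{0, i_1, …, i_n}` equals
`L†_{xx}(g) = n - 2·Σ_{k=1}^{n} (f+1)^{-i_k} + 1/(f+1) - (f+1)^{-(g+1)}`. -/
theorem stmt_18 (f : ℕ) (hf : 1 ≤ f) (g : ℕ) (x : URTV f g) :
    gdag (urtGraph f g) x x =
      ((urtLabel f g x).tail.length : ℝ) -
        2 * ((urtLabel f g x).tail.map (fun i => ((f : ℝ) + 1) ^ (-(i : ℤ)))).sum +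
        1 / ((f : ℝ) + 1) - ((f : ℝ) + 1) ^ (-((g : ℤ) + 1)) := by
  exact URTaux.stmt_18_aux f hf g x
end
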